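/- Fix an integer s ≥ 2 and p ∈ (0,1). Let X_1, X_2, … be an i.i.d. sequence of random variables with the Fréchet(α,0,1) distribution, α > 0, and for each i ∈ ℕ let Q_{i,s}^{Fr*} = −log(X_{(is, i(s+1)−1)}/X_{(i, i(s+1)−1)})/log(1 − log(s)/log(s+1)) be computed from the first n = i(s+1)−1 observations, and set (F̂_{i,s,Fr}^←)^*(p) = (−log p)^{−Q_{i,s}^{Fr*}}. Then (F̂_{i,s,Fr}^←)^*(p) converges almost surely, as i → ∞, to the theoretical quantile F_X^←(p) = (−log p)^{−1/α}. -/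

import Mathlib

open MeasureTheory ProbabilityTheory Real Filter

/-- The `k`-th order statistic (1-based indexing) of the sample `x : Fin n → ℝ`. -/
noncomputable def orderStat (n : ℕ) (x : Fin n → ℝ) (k : ℕ) : ℝ :=
  (Multiset.sort ((List.ofFn x : List ℝ) : Multiset ℝ) (· ≤ ·)).getD (k - 1) 0

/-- The cumulative distribution function of the Fréchet(α, 0, 1) distribution. -/
noncomputable def frechetCDF (α : ℝ) (x : ℝ) : ℝ :=
  if 0 < x then Real.exp (-(x ^ (-α))) else 0

open Topology

section Aux

lemma sorted_getElem_le_iff {l : List ℝ} (hl : l.Pairwise (· ≤ ·)) {i : ℕ} (hi : i < l.length)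
    (t : ℝ) :
    l[i] ≤ t ↔ i < (l.filter (fun a => decide (a ≤ t))).length := by
  constructor
  · intro h
    have h1 : (l.take (i+1)).filter (fun a => decide (a ≤ t)) = l.take (i+1) := by
      apply List.filter_eq_self.2
      intro a ha
      simp only [decide_eq_true_eq]
      obtain ⟨j, hj, rfl⟩ := List.getElem_of_mem ha
      rw [List.getElem_take]
      have hj' : j ≤ i := by
        have := hj
        simp [List.length_take] at this
        omega
      exact le_trans (hl.rel_get_of_le (a := ⟨j, by omega⟩) (b := ⟨i, hi⟩) hj') h
    have := ((List.take_sublist (i+1) l).filter (fun a => decide (a ≤ t))).length_le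
    rw [h1, List.length_take] at this
    omega
  · intro h
    by_contra hc
    push_neg at hc
    have h1 : (l.drop i).filter (fun a => decide (a ≤ t)) = [] := by
      apply List.filter_eq_nil_iff.2
      intro a ha
      simp only [decide_eq_true_eq, not_le]
      obtain ⟨j, hj, rfl⟩ := List.getElem_of_mem ha
      rw [List.getElem_drop]
      refine lt_of_lt_of_le hc (hl.rel_get_of_le (a := ⟨i, hi⟩)
        (b := ⟨i + j, by have := hj; rw [List.length_drop] at this; omega⟩)
        (Fin.mk_le_mk.2 (by omega)))
    have : l.filter (fun a => decide (a ≤ t))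
        = (l.take i).filter (fun a => decide (a ≤ t))
          ++ (l.drop i).filter (fun a => decide (a ≤ t)) := by
      rw [← List.filter_append, List.take_append_drop]
    rw [h1, List.append_nil] at this
    have := this ▸ (List.length_filter_le _ (l.take i))
    simp [List.length_take] at this
    omega

lemma filter_ofFn_length {n : ℕ} (x : Fin n → ℝ) (t : ℝ) :
    ((List.ofFn x).filter (fun a => decide (a ≤ t))).length
      = (Finset.univ.filter (fun j => x j ≤ t)).card := by
  rw [← List.countP_eq_length_filter]
  induction n with
  | zero => simp
  | succ m ih =>
    rw [List.ofFn_succ, List.countP_cons]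
    rw [ih (fun j => x j.succ)]
    rw [Fin.card_filter_univ_succ]
    by_cases h : x 0 ≤ t <;> simp [h, add_comm]

lemma orderStat_le_iff {n : ℕ} (x : Fin n → ℝ) {k : ℕ} (hk1 : 1 ≤ k) (hkn : k ≤ n) (t : ℝ) :
    orderStat n x k ≤ t ↔ k ≤ (Finset.univ.filter (fun j => x j ≤ t)).card := by
  set l := Multiset.sort ((List.ofFn x : List ℝ) : Multiset ℝ) (· ≤ ·) with hl
  have hlen : l.length = n := by
    rw [hl, Multiset.length_sort, Multiset.coe_card, List.length_ofFn]
  have hperm : l.Perm (List.ofFn x) := Multiset.coe_eq_coe.1 (Multiset.sort_eq _ _)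
  have hsorted : l.Pairwise (· ≤ ·) := Multiset.pairwise_sort _ _
  have hi : k - 1 < l.length := by omega
  have hgd : orderStat n x k = l[k-1] := List.getD_eq_getElem l 0 hi
  rw [hgd, sorted_getElem_le_iff hsorted hi t,
    (hperm.filter (fun a => decide (a ≤ t))).length_eq, filter_ofFn_length]
  omega

lemma tendsto_orderStat (x : ℕ → ℝ) (N k : ℕ → ℕ) (T : ℝ)
    (F : ℝ → ℝ) (q : ℝ)
    (hks : ∀ᶠ i in atTop, 1 ≤ k i ∧ k i ≤ N i)
    (hkN : Tendsto (fun i => (k i : ℝ) / (N i)) atTop (𝓝 q))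
    (hFU : ∀ m : ℕ, q < F (T + T / (m + 1)))
    (hFL : ∀ m : ℕ, F (T - T / (m + 2)) < q)
    (hempU : ∀ m : ℕ, Tendsto (fun i =>
        ((Finset.univ.filter (fun j : Fin (N i) => x j ≤ T + T / (m + 1))).card : ℝ) / (N i))
        atTop (𝓝 (F (T + T / (m + 1)))))
    (hempL : ∀ m : ℕ, Tendsto (fun i =>
        ((Finset.univ.filter (fun j : Fin (N i) => x j ≤ T - T / (m + 2))).card : ℝ) / (N i))
        atTop (𝓝 (F (T - T / (m + 2)))))
    (hT : 0 < T) :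
    Tendsto (fun i => orderStat (N i) (fun j => x j) (k i)) atTop (𝓝 T) := by
  rw [Metric.tendsto_nhds]
  intro ε hε
  obtain ⟨m, hm⟩ := exists_nat_gt (T / ε)
  have hmε1 : T / (m + 1) < ε := by
    rw [div_lt_iff₀ (by positivity)] at hm ⊢
    nlinarith [hε.le, hm]
  have hmε2 : T / (m + 2) < ε := by
    rw [div_lt_iff₀ (by positivity)]
    rw [div_lt_iff₀ hε] at hm
    nlinarith [hε.le]
  have hup : ∀ᶠ i in atTop,
      orderStat (N i) (fun j => x j) (k i) ≤ T + T / (m + 1) := by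
    filter_upwards [hks, hkN.eventually_lt (hempU m) (hFU m)] with i hki hlt
    rw [orderStat_le_iff _ hki.1 hki.2]
    have hNpos : (0:ℝ) < N i := by
      have := hki.1.trans hki.2
      exact_mod_cast Nat.pos_of_ne_zero (by omega)
    have := (div_lt_div_iff_of_pos_right hNpos).1 hlt
    exact_mod_cast this.le
  have hdown : ∀ᶠ i in atTop,
      T - T / (m + 2) < orderStat (N i) (fun j => x j) (k i) := by
    filter_upwards [hks, (hempL m).eventually_lt hkN (hFL m)] with i hki hlt
    by_contra hc
    push_neg at hc
    rw [orderStat_le_iff _ hki.1 hki.2] at hc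
    have hNpos : (0:ℝ) < N i := by
      have := hki.1.trans hki.2
      exact_mod_cast Nat.pos_of_ne_zero (by omega)
    have h2 := (div_lt_div_iff_of_pos_right hNpos).1 hlt
    have h3 : ((Finset.univ.filter
        (fun j : Fin (N i) => x j ≤ T - T / (m + 2))).card : ℝ) < k i := h2
    exact absurd hc (by push_neg; exact_mod_cast h3)
  filter_upwards [hup, hdown] with i h1 h2
  rw [Real.dist_eq, abs_sub_lt_iff]
  constructor <;> linarith

lemma emp_cdf {Ω : Type*} [MeasurableSpace Ω] (μ : Measure Ω) [IsProbabilityMeasure μ]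
    (X : ℕ → Ω → ℝ) (hmeas : ∀ k, Measurable (X k))
    (hindep : iIndepFun X μ)
    (hident : ∀ k, IdentDistrib (X k) (X 0) μ μ) (t : ℝ) :
    ∀ᵐ ω ∂μ, Tendsto (fun n : ℕ =>
        (∑ j ∈ Finset.range n, (if X j ω ≤ t then (1:ℝ) else 0)) / n)
      atTop (𝓝 ((μ {ω | X 0 ω ≤ t}).toReal)) := by
  set g : ℝ → ℝ := (Set.Iic t).indicator (fun _ => (1:ℝ)) with hg
  have hgmeas : Measurable g := (measurable_const).indicator measurableSet_Iic
  set Y : ℕ → Ω → ℝ := fun k => g ∘ X k with hY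
  have hYeq : ∀ k ω, Y k ω = if X k ω ≤ t then (1:ℝ) else 0 := by
    intro k ω
    simp [hY, hg, Set.indicator, Set.mem_Iic]
  have hYindep : Pairwise (Function.onFun (IndepFun · · μ) Y) := by
    intro i j hij
    exact (hindep.comp (fun _ => g) (fun _ => hgmeas)).indepFun hij
  have hYident : ∀ k, IdentDistrib (Y k) (Y 0) μ μ :=
    fun k => (hident k).comp hgmeas
  have hs : MeasurableSet ((X 0) ⁻¹' Set.Iic t) := (hmeas 0) measurableSet_Iic
  have hYint : Integrable (Y 0) μ := by
    have : Y 0 = Set.indicator ((X 0) ⁻¹' Set.Iic t) (fun _ => (1:ℝ)) := by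
      funext ω; simp [hYeq, Set.indicator, Set.mem_Iic]
    rw [this, integrable_indicator_iff hs]
    exact integrableOn_const (measure_lt_top μ _).ne
  have hint : μ[Y 0] = (μ {ω | X 0 ω ≤ t}).toReal := by
    have : Y 0 = Set.indicator ((X 0) ⁻¹' Set.Iic t) (fun _ => (1:ℝ)) := by
      funext ω; simp [hYeq, Set.indicator, Set.mem_Iic]
    rw [this, integral_indicator_const _ hs]
    simp only [smul_eq_mul, mul_one]
    rfl
  have := strong_law_ae_real Y hYint hYindep hYident
  rw [hint] at this
  filter_upwards [this] with ω hω
  have heq : ∀ n : ℕ, (∑ j ∈ Finset.range n, (if X j ω ≤ t then (1:ℝ) else 0)) / n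
      = (∑ j ∈ Finset.range n, Y j ω) / n := by
    intro n
    simp only [hYeq]
  simpa only [heq] using hω

lemma frechet_nonneg (α x : ℝ) : 0 ≤ frechetCDF α x := by
  unfold frechetCDF; split_ifs; exacts [(Real.exp_pos _).le, le_refl _]

lemma frechet_strictMono {α : ℝ} (hα : 0 < α) {a b : ℝ} (ha : 0 < a) (hab : a < b) :
    frechetCDF α a < frechetCDF α b := by
  unfold frechetCDF
  rw [if_pos ha, if_pos (ha.trans hab)]
  apply Real.exp_lt_exp.2
  have := Real.rpow_lt_rpow_of_neg ha hab (by linarith : -α < 0)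
  linarith

lemma frechet_quantile {α : ℝ} (hα : 0 < α) {q : ℝ} (hq0 : 0 < q) (hq1 : q < 1) :
    frechetCDF α ((-Real.log q) ^ (-(1/α)) : ℝ) = q := by
  have hl : 0 < -Real.log q := by have := Real.log_neg hq0 hq1; linarith
  have hT : 0 < (-Real.log q) ^ (-(1/α) : ℝ) := Real.rpow_pos_of_pos hl _
  unfold frechetCDF
  rw [if_pos hT, ← Real.rpow_mul hl.le,
    show (-(1/α)) * (-α) = 1 by field_simp, Real.rpow_one, neg_neg, Real.exp_log hq0]

lemma ident_of_cdf {Ω : Type*} [MeasurableSpace Ω] (μ : Measure Ω) [IsProbabilityMeasure μ]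
    (X : ℕ → Ω → ℝ) (hmeas : ∀ k, Measurable (X k)) {α : ℝ}
    (hdist : ∀ k x, μ {ω | X k ω ≤ x} = ENNReal.ofReal (frechetCDF α x)) (k : ℕ) :
    IdentDistrib (X k) (X 0) μ μ := by
  refine ⟨(hmeas k).aemeasurable, (hmeas 0).aemeasurable, ?_⟩
  have h1 := Measure.isProbabilityMeasure_map (μ := μ) (hmeas k).aemeasurable
  refine Measure.ext_of_Iic _ _ (fun a => ?_)
  rw [Measure.map_apply (hmeas k) measurableSet_Iic,
    Measure.map_apply (hmeas 0) measurableSet_Iic]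
  show μ {ω | X k ω ≤ a} = μ {ω | X 0 ω ≤ a}
  rw [hdist k a, hdist 0 a]

lemma card_filter_eq_sum (n : ℕ) (x : ℕ → ℝ) (t : ℝ) :
    ((Finset.univ.filter (fun j : Fin n => x j ≤ t)).card : ℝ)
      = ∑ j ∈ Finset.range n, (if x j ≤ t then (1:ℝ) else 0) := by
  rw [Finset.card_filter]
  push_cast
  rw [← Fin.sum_univ_eq_sum_range (fun j => if x j ≤ t then (1:ℝ) else 0)]

lemma emp_card {Ω : Type*} [MeasurableSpace Ω] (μ : Measure Ω) [IsProbabilityMeasure μ]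
    {α : ℝ} (X : ℕ → Ω → ℝ) (hmeas : ∀ k, Measurable (X k))
    (hindep : iIndepFun X μ)
    (hdist : ∀ k x, μ {ω | X k ω ≤ x} = ENNReal.ofReal (frechetCDF α x))
    (N : ℕ → ℕ) (hN : Tendsto N atTop atTop) (t : ℝ) :
    ∀ᵐ ω ∂μ, Tendsto (fun i =>
        ((Finset.univ.filter (fun j : Fin (N i) => X (j : ℕ) ω ≤ t)).card : ℝ) / (N i))
      atTop (𝓝 (frechetCDF α t)) := by
  have h0 : (μ {ω | X 0 ω ≤ t}).toReal = frechetCDF α t := by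
    rw [hdist]; exact ENNReal.toReal_ofReal (frechet_nonneg _ _)
  filter_upwards [emp_cdf μ X hmeas hindep (ident_of_cdf μ X hmeas hdist) t] with ω hω
  rw [h0] at hω
  have h2 := hω.comp hN
  have h3 : (fun i => ((Finset.univ.filter
        (fun j : Fin (N i) => X (j : ℕ) ω ≤ t)).card : ℝ) / (N i))
      = fun i => (∑ j ∈ Finset.range (N i), (if X j ω ≤ t then (1:ℝ) else 0)) / (N i) := by
    funext i; exact congrArg (· / (N i : ℝ)) (card_filter_eq_sum (N i) (fun n => X n ω) t)
  rw [h3]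
  exact h2

end Aux

/-- For fixed `s ≥ 2`, `p ∈ (0,1)` and an i.i.d. sequence from the
Fréchet(α,0,1) distribution, the quantile estimators
`(-log p)^{-Q_{i,s}^{Fr*}}`, computed from the first `n = i(s+1)-1`
observations, converge almost surely to the theoretical quantile
`(-log p)^{-1/α}` as `i → ∞`. -/
theorem stmt11 {Ω : Type*} [MeasurableSpace Ω] (μ : Measure Ω) [IsProbabilityMeasure μ]
    (s : ℕ) (hs : 2 ≤ s) (p : ℝ) (hp : p ∈ Set.Ioo (0 : ℝ) 1)
    (α : ℝ) (hα : 0 < α)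
    (X : ℕ → Ω → ℝ) (hmeas : ∀ k, Measurable (X k))
    (hindep : iIndepFun X μ)
    (hdist : ∀ k x, μ {ω | X k ω ≤ x} = ENNReal.ofReal (frechetCDF α x)) :
    ∀ᵐ ω ∂μ, Tendsto (fun i : ℕ =>
        (-Real.log p) ^ (-(-(Real.log
          (orderStat (i * (s + 1) - 1) (fun j => X j ω) (i * s) /
            orderStat (i * (s + 1) - 1) (fun j => X j ω) i) /
          Real.log (1 - Real.log s / Real.log (s + 1))))))
      atTop (nhds ((-Real.log p) ^ (-(1 / α)))) := by
  obtain ⟨hp0, hp1⟩ := hp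
  have hsR : (2:ℝ) ≤ (s:ℝ) := by exact_mod_cast hs
  -- the sample sizes
  have hNtend : Tendsto (fun i : ℕ => i * (s + 1) - 1) atTop atTop := by
    refine tendsto_atTop_mono (fun i => ?_) tendsto_id
    show i ≤ i * (s + 1) - 1
    have h3 : i * 3 ≤ i * (s + 1) := Nat.mul_le_mul_left _ (by omega)
    omega
  -- the two quantile levels
  set q1 : ℝ := (s:ℝ) / ((s:ℝ) + 1) with hq1def
  set q2 : ℝ := 1 / ((s:ℝ) + 1) with hq2def
  have hq10 : 0 < q1 := by rw [hq1def]; positivity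
  have hq11 : q1 < 1 := by rw [hq1def, div_lt_one (by positivity)]; linarith
  have hq20 : 0 < q2 := by rw [hq2def]; positivity
  have hq21 : q2 < 1 := by rw [hq2def, div_lt_one (by positivity)]; linarith
  set T1 : ℝ := (-Real.log q1) ^ (-(1/α) : ℝ) with hT1def
  set T2 : ℝ := (-Real.log q2) ^ (-(1/α) : ℝ) with hT2def
  have hlq1 : 0 < -Real.log q1 := by have := Real.log_neg hq10 hq11; linarith
  have hlq2 : 0 < -Real.log q2 := by have := Real.log_neg hq20 hq21; linarith
  have hT1 : 0 < T1 := Real.rpow_pos_of_pos hlq1 _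
  have hT2 : 0 < T2 := Real.rpow_pos_of_pos hlq2 _
  have hFT1 : frechetCDF α T1 = q1 := frechet_quantile hα hq10 hq11
  have hFT2 : frechetCDF α T2 = q2 := frechet_quantile hα hq20 hq21
  -- ratio limits
  have hbase : Tendsto (fun i : ℕ => ((s:ℝ) + 1) - 1 / i) atTop (𝓝 ((s:ℝ) + 1)) := by
    have h := tendsto_one_div_atTop_nhds_zero_nat (𝕜 := ℝ)
    simpa using tendsto_const_nhds.sub h
  have hcastN : ∀ i : ℕ, 1 ≤ i → ((i * (s + 1) - 1 : ℕ) : ℝ) = (i:ℝ) * ((s:ℝ) + 1) - 1 := by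
    intro i hi
    have h1 : (1:ℕ) ≤ i * (s + 1) := by
      have := Nat.mul_le_mul hi (show 1 ≤ s + 1 by omega)
      omega
    push_cast [h1]
    ring
  have hNne : ∀ i : ℕ, 1 ≤ i → ((s:ℝ) + 1) - 1 / i = ((i:ℝ) * ((s:ℝ) + 1) - 1) / i := by
    intro i hi
    have hipos : (0:ℝ) < i := by exact_mod_cast hi
    field_simp
  have hkN1 : Tendsto (fun i : ℕ => ((i * s : ℕ) : ℝ) / ((i * (s + 1) - 1 : ℕ) : ℝ))
      atTop (𝓝 q1) := by
    have hlim : Tendsto (fun i : ℕ => (s:ℝ) / (((s:ℝ) + 1) - 1 / i)) atTop (𝓝 q1) := by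
      rw [hq1def]
      exact tendsto_const_nhds.div hbase (by positivity)
    refine hlim.congr' ?_
    filter_upwards [eventually_ge_atTop 1] with i hi
    rw [hNne i hi, div_div_eq_mul_div, hcastN i hi]
    push_cast
    rw [mul_comm (s:ℝ) (i:ℝ)]
  have hkN2 : Tendsto (fun i : ℕ => ((i : ℕ) : ℝ) / ((i * (s + 1) - 1 : ℕ) : ℝ))
      atTop (𝓝 q2) := by
    have hlim : Tendsto (fun i : ℕ => (1:ℝ) / (((s:ℝ) + 1) - 1 / i)) atTop (𝓝 q2) := by
      rw [hq2def]
      exact tendsto_const_nhds.div hbase (by positivity)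
    refine hlim.congr' ?_
    filter_upwards [eventually_ge_atTop 1] with i hi
    rw [hNne i hi, div_div_eq_mul_div, hcastN i hi, one_mul]
  -- eventual bounds on the ranks
  have hks1 : ∀ᶠ i in atTop, 1 ≤ i * s ∧ i * s ≤ i * (s + 1) - 1 := by
    filter_upwards [eventually_ge_atTop 1] with i hi
    have h1 : 1 * 1 ≤ i * s := Nat.mul_le_mul hi (by omega)
    have h2 : i * (s + 1) = i * s + i := by ring
    omega
  have hks2 : ∀ᶠ i in atTop, 1 ≤ i ∧ i ≤ i * (s + 1) - 1 := by
    filter_upwards [eventually_ge_atTop 1] with i hi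
    have h1 : 1 * 1 ≤ i * s := Nat.mul_le_mul hi (by omega)
    have h2 : i * (s + 1) = i * s + i := by ring
    omega
  -- monotonicity bounds on the CDF around the two quantiles
  have hFU1 : ∀ m : ℕ, q1 < frechetCDF α (T1 + T1 / (m + 1)) := by
    intro m
    rw [← hFT1]
    exact frechet_strictMono hα hT1 (lt_add_of_pos_right _ (by positivity))
  have hFL1 : ∀ m : ℕ, frechetCDF α (T1 - T1 / (m + 2)) < q1 := by
    intro m
    rw [← hFT1]
    have h1 : T1 / (m + 2) < T1 := div_lt_self hT1 (by have : (0:ℝ) ≤ (m:ℝ) := Nat.cast_nonneg m; linarith)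
    exact frechet_strictMono hα (by linarith) (sub_lt_self _ (by positivity))
  have hFU2 : ∀ m : ℕ, q2 < frechetCDF α (T2 + T2 / (m + 1)) := by
    intro m
    rw [← hFT2]
    exact frechet_strictMono hα hT2 (lt_add_of_pos_right _ (by positivity))
  have hFL2 : ∀ m : ℕ, frechetCDF α (T2 - T2 / (m + 2)) < q2 := by
    intro m
    rw [← hFT2]
    have h1 : T2 / (m + 2) < T2 := div_lt_self hT2 (by have : (0:ℝ) ≤ (m:ℝ) := Nat.cast_nonneg m; linarith)
    exact frechet_strictMono hα (by linarith) (sub_lt_self _ (by positivity))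
  -- the almost sure event
  have hae : ∀ᵐ ω ∂μ, ∀ m : ℕ,
      (Tendsto (fun i => ((Finset.univ.filter
          (fun j : Fin (i * (s + 1) - 1) => X (j : ℕ) ω ≤ T1 + T1 / (m + 1))).card : ℝ)
          / ((i * (s + 1) - 1 : ℕ) : ℝ)) atTop (𝓝 (frechetCDF α (T1 + T1 / (m + 1))))) ∧
      (Tendsto (fun i => ((Finset.univ.filter
          (fun j : Fin (i * (s + 1) - 1) => X (j : ℕ) ω ≤ T1 - T1 / (m + 2))).card : ℝ)
          / ((i * (s + 1) - 1 : ℕ) : ℝ)) atTop (𝓝 (frechetCDF α (T1 - T1 / (m + 2))))) ∧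
      (Tendsto (fun i => ((Finset.univ.filter
          (fun j : Fin (i * (s + 1) - 1) => X (j : ℕ) ω ≤ T2 + T2 / (m + 1))).card : ℝ)
          / ((i * (s + 1) - 1 : ℕ) : ℝ)) atTop (𝓝 (frechetCDF α (T2 + T2 / (m + 1))))) ∧
      (Tendsto (fun i => ((Finset.univ.filter
          (fun j : Fin (i * (s + 1) - 1) => X (j : ℕ) ω ≤ T2 - T2 / (m + 2))).card : ℝ)
          / ((i * (s + 1) - 1 : ℕ) : ℝ)) atTop (𝓝 (frechetCDF α (T2 - T2 / (m + 2))))) := by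
    rw [ae_all_iff]
    intro m
    exact ((emp_card μ X hmeas hindep hdist _ hNtend _).and
      ((emp_card μ X hmeas hindep hdist _ hNtend _).and
      ((emp_card μ X hmeas hindep hdist _ hNtend _).and
      (emp_card μ X hmeas hindep hdist _ hNtend _))))
  filter_upwards [hae] with ω hω
  have hA1 : Tendsto (fun i => orderStat (i * (s + 1) - 1) (fun j => X (j : ℕ) ω) (i * s))
      atTop (𝓝 T1) :=
    tendsto_orderStat (fun n => X n ω) (fun i => i * (s + 1) - 1) (fun i => i * s) T1
      (frechetCDF α) q1 hks1 hkN1 hFU1 hFL1 (fun m => (hω m).1) (fun m => (hω m).2.1) hT1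
  have hA2 : Tendsto (fun i => orderStat (i * (s + 1) - 1) (fun j => X (j : ℕ) ω) i)
      atTop (𝓝 T2) :=
    tendsto_orderStat (fun n => X n ω) (fun i => i * (s + 1) - 1) (fun i => i) T2
      (frechetCDF α) q2 hks2 hkN2 hFU2 hFL2 (fun m => (hω m).2.2.1) (fun m => (hω m).2.2.2) hT2
  -- log computations
  have hb0 : 0 < 1 - Real.log s / Real.log (s + 1) := by
    have h1 : Real.log (s:ℝ) < Real.log ((s:ℝ) + 1) :=
      Real.log_lt_log (by linarith) (by linarith)
    have h2 : 0 < Real.log ((s:ℝ) + 1) := Real.log_pos (by linarith)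
    have := (div_lt_one h2).2 h1
    linarith
  have hb1 : 1 - Real.log s / Real.log (s + 1) < 1 := by
    have h1 : 0 < Real.log (s:ℝ) := Real.log_pos (by linarith)
    have h2 : 0 < Real.log ((s:ℝ) + 1) := Real.log_pos (by linarith)
    have := div_pos h1 h2
    linarith
  set c : ℝ := Real.log (1 - Real.log s / Real.log (s + 1)) with hcdef
  have hc : c < 0 := Real.log_neg hb0 hb1
  have hlog2 : 0 < Real.log ((s:ℝ) + 1) := Real.log_pos (by linarith)
  have hT1T2 : T1 / T2 = (1 - Real.log s / Real.log (s + 1)) ^ (-(1/α) : ℝ) := by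
    rw [hT1def, hT2def, ← Real.div_rpow hlq1.le hlq2.le]
    congr 1
    rw [hq1def, hq2def, Real.log_div (by positivity) (by positivity),
      Real.log_div one_ne_zero (by positivity), Real.log_one]
    field_simp
    rw [zero_sub, div_neg, mul_div_cancel_left₀ _ hlog2.ne']
    ring
  have hlogT1T2 : Real.log (T1 / T2) = (-(1/α)) * c := by
    rw [hT1T2, Real.log_rpow hb0, hcdef]
  have hdivA : Tendsto (fun i => orderStat (i * (s + 1) - 1) (fun j => X (j : ℕ) ω) (i * s)
      / orderStat (i * (s + 1) - 1) (fun j => X (j : ℕ) ω) i) atTop (𝓝 (T1 / T2)) :=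
    hA1.div hA2 hT2.ne'
  have hlogA : Tendsto (fun i => Real.log (orderStat (i * (s + 1) - 1)
      (fun j => X (j : ℕ) ω) (i * s) / orderStat (i * (s + 1) - 1) (fun j => X (j : ℕ) ω) i))
      atTop (𝓝 (Real.log (T1 / T2))) :=
    (Real.continuousAt_log (by positivity)).tendsto.comp hdivA
  have he : Tendsto (fun i => Real.log (orderStat (i * (s + 1) - 1)
      (fun j => X (j : ℕ) ω) (i * s) / orderStat (i * (s + 1) - 1) (fun j => X (j : ℕ) ω) i) / c)
      atTop (𝓝 (-(1/α))) := by
    have := hlogA.div_const c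
    rwa [hlogT1T2, mul_div_assoc, div_self hc.ne, mul_one] at this
  have hlp : 0 < -Real.log p := by have := Real.log_neg hp0 hp1; linarith
  have hfinal := tendsto_const_nhds.rpow he (Or.inl hlp.ne')
  simp only [neg_neg]
  exact hfinal
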